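/- Subadditivity of edit distance under concatenation: for all lists A1, A2, B1, B2 over a type with decidable equality, d(A1 ++ A2, B1 ++ B2) ≤ d(A1, B1) + d(A2, B2). -/

import Mathlib

namespace Levenshtein

/-- A cost structure for Levenshtein edit distance (as in the older Mathlib). -/
structure Cost (α β δ : Type*) where
  /-- Cost to delete an element from a list. -/
  delete : α → δ
  /-- Cost in insert an element into a list. -/
  insert : β → δ
  /-- Cost to substitute one element for another in a list. -/
  substitute : α → β → δ

/-- The default cost structure, for which the distance is the unit-cost edit distance. -/
def defaultCost {α : Type*} [DecidableEq α] : Cost α α ℕ where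
  delete _ := 1
  insert _ := 1
  substitute a b := if a = b then 0 else 1

/-- Inner step of the Levenshtein dynamic programme (as in the older Mathlib). -/
def impl {α β δ : Type*} [AddZeroClass δ] [Min δ] (C : Cost α β δ)
    (xs : List α) (y : β) (d : {r : List δ // 0 < r.length}) :
    {r : List δ // 0 < r.length} :=
  let ⟨ds, w⟩ := d
  xs.zip (ds.zip ds.tail) |>.foldr
    (init := ⟨[C.insert y + ds.getLast (List.ne_nil_of_length_pos w)], by simp⟩)
    (fun ⟨x, d₀, d₁⟩ ⟨r, w⟩ =>
      ⟨min (C.delete x + r[0]) (min (C.insert y + d₀) (C.substitute x y + d₁)) :: r, by simp⟩)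

end Levenshtein

/-- Levenshtein distances of all pairs of suffixes (as in the older Mathlib). -/
def suffixLevenshtein {α β δ : Type*} [AddZeroClass δ] [Min δ] (C : Levenshtein.Cost α β δ)
    (xs : List α) (ys : List β) : {r : List δ // 0 < r.length} :=
  ys.foldr
    (Levenshtein.impl C xs)
    (xs.foldr (init := ⟨[0], by simp⟩) (fun a ⟨r, w⟩ => ⟨(C.delete a + r[0]) :: r, by simp⟩))

/-- The Levenshtein distance (as in the older Mathlib). -/
def levenshtein {α β δ : Type*} [AddZeroClass δ] [Min δ] (C : Levenshtein.Cost α β δ)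
    (xs : List α) (ys : List β) : δ :=
  let ⟨r, w⟩ := suffixLevenshtein C xs ys
  r[0]

/-- The unit-cost Levenshtein edit distance. -/
def editDist {α : Type*} [DecidableEq α] (A B : List α) : ℕ :=
  levenshtein Levenshtein.defaultCost A B


namespace Levenshtein

@[simp] theorem defaultCost_delete {α : Type*} [DecidableEq α] (a : α) :
    (defaultCost : Cost α α ℕ).delete a = 1 := rfl

@[simp] theorem defaultCost_insert {α : Type*} [DecidableEq α] (a : α) :
    (defaultCost : Cost α α ℕ).insert a = 1 := rfl

@[simp] theorem defaultCost_substitute {α : Type*} [DecidableEq α] (a b : α) :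
    (defaultCost : Cost α α ℕ).substitute a b = if a = b then 0 else 1 := rfl

variable {α β δ : Type*} [AddZeroClass δ] [Min δ] {C : Cost α β δ}

theorem impl_cons {x : α} {xs : List α} {y : β} {d : δ} {ds : List δ}
    (w' : 0 < List.length ds) :
    impl C (x :: xs) y ⟨d :: ds, by simp⟩ =
      let ⟨r, w⟩ := impl C xs y ⟨ds, w'⟩
      ⟨min (C.delete x + r[0]) (min (C.insert y + d) (C.substitute x y + ds[0])) :: r, by simp⟩ :=
  match ds, w' with | _ :: _, _ => rfl

theorem impl_cons_fst_zero {x : α} {xs : List α} {y : β} {d : δ} {ds : List δ}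
    (h) (w' : 0 < List.length ds) :
    (impl C (x :: xs) y ⟨d :: ds, h⟩).1[0]'(impl C (x :: xs) y ⟨d :: ds, h⟩).2 =
      let ⟨r, w⟩ := impl C xs y ⟨ds, w'⟩
      min (C.delete x + r[0]) (min (C.insert y + d) (C.substitute x y + ds[0])) :=
  match ds, w' with | _ :: _, _ => rfl

theorem impl_length {xs : List α} {y : β} (d : {r : List δ // 0 < r.length})
    (w : d.1.length = xs.length + 1) :
    (impl C xs y d).1.length = xs.length + 1 := by
  induction xs generalizing d with
  | nil => rfl
  | cons x xs ih =>
    match d, w with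
    | ⟨d₁ :: d₂ :: ds, _⟩, w =>
      have := ih ⟨d₂ :: ds, (by simp)⟩ (by simpa using w)
      rw [impl_cons (by simp)]
      simpa using this

end Levenshtein

open Levenshtein

section LevLemmas

variable {α β δ : Type*} [AddZeroClass δ] [Min δ] (C : Cost α β δ)

theorem suffixLevenshtein_length (xs : List α) (ys : List β) :
    (suffixLevenshtein C xs ys).1.length = xs.length + 1 := by
  induction ys with
  | nil =>
    dsimp [suffixLevenshtein]
    induction xs with
    | nil => rfl
    | cons _ xs ih => simp_all
  | cons y ys ih =>
    dsimp [suffixLevenshtein]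
    rw [impl_length]
    exact ih

theorem suffixLevenshtein_cons₂ (xs : List α) (y ys) :
    suffixLevenshtein C xs (y :: ys) = (impl C xs) y (suffixLevenshtein C xs ys) :=
  rfl

theorem suffixLevenshtein_cons₁_aux {α} {x y : {r : List α // 0 < r.length}}
    (w₀ : x.1[0]'x.2 = y.1[0]'y.2) (w : x.1.tail = y.1.tail) : x = y := by
  match x, y with
  | ⟨hx :: tx, _⟩, ⟨hy :: ty, _⟩ => simp_all

theorem suffixLevenshtein_cons₁ (x : α) (xs ys) :
    suffixLevenshtein C (x :: xs) ys =
      ⟨levenshtein C (x :: xs) ys :: (suffixLevenshtein C xs ys).1, by simp⟩ := by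
  induction ys with
  | nil => rfl
  | cons y ys ih =>
    apply suffixLevenshtein_cons₁_aux
    · rfl
    · rw [suffixLevenshtein_cons₂ (xs := x :: xs), ih, impl_cons]
      · rfl
      · simp [suffixLevenshtein_length]

theorem get0_congr {s t : {r : List δ // 0 < r.length}} (h : s = t) :
    s.1[0]'s.2 = t.1[0]'t.2 := by subst h; rfl

theorem levenshtein_cons_cons (x : α) (xs : List α) (y : β) (ys : List β) :
    levenshtein C (x :: xs) (y :: ys) =
      min (C.delete x + levenshtein C xs (y :: ys))
        (min (C.insert y + levenshtein C (x :: xs) ys)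
          (C.substitute x y + levenshtein C xs ys)) := by
  have key : suffixLevenshtein C (x :: xs) (y :: ys) =
      impl C (x :: xs) y ⟨levenshtein C (x :: xs) ys :: (suffixLevenshtein C xs ys).1, by simp⟩ := by
    rw [suffixLevenshtein_cons₂, suffixLevenshtein_cons₁]
  have e := get0_congr key
  refine e.trans ?_
  rw [impl_cons_fst_zero (w' := by simp [suffixLevenshtein_length])]
  rfl

@[simp] theorem levenshtein_nil_nil : levenshtein C [] [] = 0 := rfl

@[simp] theorem levenshtein_cons_nil (x : α) (xs : List α) :
    levenshtein C (x :: xs) [] = C.delete x + levenshtein C xs [] := rfl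

@[simp] theorem levenshtein_nil_cons (y : β) (ys : List β) :
    levenshtein C [] (y :: ys) = C.insert y + levenshtein C [] ys := by
  have aux : ∀ (d : {r : List δ // 0 < r.length}), d.1.length = 1 →
      (impl C [] y d).1[0]'(impl C [] y d).2 = C.insert y + d.1[0]'d.2 := by
    intro d h
    obtain ⟨ds, w⟩ := d
    match ds, w, h with
    | [e], _, _ => rfl
  exact aux _ (suffixLevenshtein_length C [] ys)

end LevLemmas

lemma editDist_cons_right_le {α : Type*} [DecidableEq α] (xs : List α) (y : α) (ys : List α) :
    editDist xs (y :: ys) ≤ 1 + editDist xs ys := by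
  cases xs with
  | nil => simp [editDist]
  | cons a as =>
    simp only [editDist, levenshtein_cons_cons]
    exact le_trans (min_le_right _ _) (min_le_left _ _)

lemma editDist_cons_left_le {α : Type*} [DecidableEq α] (x : α) (xs ys : List α) :
    editDist (x :: xs) ys ≤ 1 + editDist xs ys := by
  cases ys with
  | nil => simp [editDist]
  | cons b bs =>
    simp only [editDist, levenshtein_cons_cons]
    exact min_le_left _ _

lemma editDist_append_right_le {α : Type*} [DecidableEq α] (xs L ys : List α) :
    editDist xs (L ++ ys) ≤ L.length + editDist xs ys := by
  induction L with
  | nil => simp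
  | cons b bs ih =>
    calc editDist xs (b :: (bs ++ ys)) ≤ 1 + editDist xs (bs ++ ys) :=
          editDist_cons_right_le _ _ _
      _ ≤ 1 + (bs.length + editDist xs ys) := by omega
      _ = (b :: bs).length + editDist xs ys := by simp; omega

lemma editDist_append_left_le {α : Type*} [DecidableEq α] (L xs ys : List α) :
    editDist (L ++ xs) ys ≤ L.length + editDist xs ys := by
  induction L with
  | nil => simp
  | cons a as ih =>
    calc editDist (a :: (as ++ xs)) ys ≤ 1 + editDist (as ++ xs) ys :=
          editDist_cons_left_le _ _ _
      _ ≤ 1 + (as.length + editDist xs ys) := by omega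
      _ = (a :: as).length + editDist xs ys := by simp; omega

lemma editDist_nil_left {α : Type*} [DecidableEq α] (L : List α) :
    editDist [] L = L.length := by
  induction L with
  | nil => simp [editDist]
  | cons b bs ih => simp [editDist] at ih ⊢; omega

lemma editDist_nil_right {α : Type*} [DecidableEq α] (L : List α) :
    editDist L [] = L.length := by
  induction L with
  | nil => simp [editDist]
  | cons a as ih => simp [editDist] at ih ⊢; omega

/-- Subadditivity of edit distance under concatenation. -/
theorem editDist_append_le {α : Type*} [DecidableEq α] (A₁ A₂ B₁ B₂ : List α) :
    editDist (A₁ ++ A₂) (B₁ ++ B₂) ≤ editDist A₁ B₁ + editDist A₂ B₂ := by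
  induction A₁ generalizing B₁ with
  | nil =>
    rw [editDist_nil_left, List.nil_append]
    exact editDist_append_right_le _ _ _
  | cons a as ihA =>
    induction B₁ with
    | nil =>
      rw [editDist_nil_right, List.nil_append]
      exact editDist_append_left_le _ _ _
    | cons b bs ihB =>
      show editDist (a :: (as ++ A₂)) (b :: (bs ++ B₂)) ≤ _
      have h1 : editDist (a :: (as ++ A₂)) (b :: (bs ++ B₂)) ≤
          (1 + editDist as (b :: bs)) + editDist A₂ B₂ := by
        have := ihA (b :: bs)
        simp only [editDist] at this
        simp only [editDist, levenshtein_cons_cons]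
        calc _ ≤ Levenshtein.defaultCost.delete a +
              levenshtein Levenshtein.defaultCost (as ++ A₂) ((b :: bs) ++ B₂) :=
              min_le_left _ _
          _ ≤ _ := by simp only [Levenshtein.defaultCost_delete]; omega
      have h2 : editDist (a :: (as ++ A₂)) (b :: (bs ++ B₂)) ≤
          (1 + editDist (a :: as) bs) + editDist A₂ B₂ := by
        have := ihB
        simp only [editDist, levenshtein_cons_cons] at this ⊢
        calc _ ≤ Levenshtein.defaultCost.insert b +
              levenshtein Levenshtein.defaultCost ((a :: as) ++ A₂) (bs ++ B₂) :=
              le_trans (min_le_right _ _) (min_le_left _ _)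
          _ ≤ _ := by simp only [Levenshtein.defaultCost_insert]; omega
      have h3 : editDist (a :: (as ++ A₂)) (b :: (bs ++ B₂)) ≤
          (Levenshtein.defaultCost.substitute a b + editDist as bs) + editDist A₂ B₂ := by
        have := ihA bs
        simp only [editDist] at this
        simp only [editDist, levenshtein_cons_cons]
        calc _ ≤ Levenshtein.defaultCost.substitute a b +
              levenshtein Levenshtein.defaultCost (as ++ A₂) (bs ++ B₂) :=
              le_trans (min_le_right _ _) (min_le_right _ _)
          _ ≤ _ := by omega
      have : editDist (a :: as) (b :: bs) =
          min (1 + editDist as (b :: bs))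
            (min (1 + editDist (a :: as) bs)
              (Levenshtein.defaultCost.substitute a b + editDist as bs)) := by
        simp [editDist, levenshtein_cons_cons]
      omega
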